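/- If τc i > 0 for all i and s is a critical point of the direct-ROI loss L (i.e., for every i the function t ↦ L(Function.update s i t) has derivative 0 at s i), then for every i one has σ(s i) = τr i / τc i, so q i is an unbiased value of the ROI τr i / τc i. -/

import Mathlib

/-- The sigmoid function. -/
noncomputable def sigm (t : ℝ) : ℝ := 1 / (1 + Real.exp (-t))

lemma one_add_exp_pos (t : ℝ) : 0 < 1 + Real.exp t := by positivity

lemma one_sub_sigm (t : ℝ) : 1 - sigm t = 1 / (1 + Real.exp t) := by
  have h1 : 1 + Real.exp (-t) ≠ 0 := ne_of_gt (one_add_exp_pos _)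
  have h2 : 1 + Real.exp t ≠ 0 := ne_of_gt (one_add_exp_pos _)
  have h3 : Real.exp t ≠ 0 := Real.exp_ne_zero t
  rw [sigm, Real.exp_neg]
  field_simp
  ring

lemma sigm_ratio (t : ℝ) : sigm t / (1 - sigm t) = Real.exp t := by
  have h1 : 1 + Real.exp (-t) ≠ 0 := ne_of_gt (one_add_exp_pos _)
  have h2 : 1 + Real.exp t ≠ 0 := ne_of_gt (one_add_exp_pos _)
  rw [one_sub_sigm, sigm, Real.exp_neg]
  have h3 : Real.exp t ≠ 0 := Real.exp_ne_zero t
  field_simp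
  ring

lemma sigm_eq (t : ℝ) : sigm t = Real.exp t / (1 + Real.exp t) := by
  have h3 : Real.exp t ≠ 0 := Real.exp_ne_zero t
  rw [sigm, Real.exp_neg]
  rw [div_eq_div_iff (by positivity) (by positivity)]
  field_simp
  ring

lemma term_eq (a b t : ℝ) :
    a * Real.log (sigm t / (1 - sigm t)) + b * Real.log (1 - sigm t)
      = a * t - b * Real.log (1 + Real.exp t) := by
  rw [sigm_ratio, Real.log_exp, one_sub_sigm, one_div, Real.log_inv]
  ring

lemma term_hasDerivAt (a b x : ℝ) :
    HasDerivAt (fun t => a * Real.log (sigm t / (1 - sigm t)) + b * Real.log (1 - sigm t))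
      (a - b * sigm x) x := by
  have h1 : HasDerivAt (fun t : ℝ => 1 + Real.exp t) (Real.exp x) x :=
    (Real.hasDerivAt_exp x).const_add 1
  have h2 : HasDerivAt (fun t : ℝ => Real.log (1 + Real.exp t))
      (Real.exp x / (1 + Real.exp x)) x := h1.log (ne_of_gt (one_add_exp_pos x))
  have h3 : HasDerivAt (fun t : ℝ => a * t - b * Real.log (1 + Real.exp t))
      (a - b * (Real.exp x / (1 + Real.exp x))) x := by
    simpa [Pi.sub_def] using ((hasDerivAt_id x).const_mul a).sub (h2.const_mul b)
  have : HasDerivAt (fun t : ℝ => a * t - b * Real.log (1 + Real.exp t)) (a - b * sigm x) x := by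
    rw [sigm_eq]; exact h3
  convert this using 1
  funext t
  exact term_eq a b t

theorem direct_roi_critical_point
    (N : ℕ) (hN : 0 < N) (s τr τc : Fin N → ℝ)
    (L : (Fin N → ℝ) → ℝ)
    (hL : L = fun u : Fin N → ℝ => -(1 / (N : ℝ)) *
      ∑ i, (τr i * Real.log (sigm (u i) / (1 - sigm (u i)))
        + τc i * Real.log (1 - sigm (u i))))
    (hτc : ∀ i, 0 < τc i)
    (hcrit : ∀ i : Fin N, HasDerivAt (fun t : ℝ => L (Function.update s i t)) 0 (s i)) :
    ∀ i : Fin N, sigm (s i) = τr i / τc i := by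
  intro i
  set C : ℝ := ∑ j ∈ Finset.univ.erase i,
    (τr j * Real.log (sigm (s j) / (1 - sigm (s j))) + τc j * Real.log (1 - sigm (s j))) with hC
  have hfun : ∀ t : ℝ, L (Function.update s i t) = -(1 / (N : ℝ)) *
      ((τr i * Real.log (sigm t / (1 - sigm t)) + τc i * Real.log (1 - sigm t)) + C) := by
    intro t
    rw [hL]
    dsimp only
    congr 1
    rw [← Finset.add_sum_erase _ _ (Finset.mem_univ i), Function.update_self]
    congr 1
    apply Finset.sum_congr rfl
    intro j hj
    rw [Function.update_of_ne (Finset.ne_of_mem_erase hj)]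
  have hg : HasDerivAt (fun t : ℝ => L (Function.update s i t))
      (-(1 / (N : ℝ)) * (τr i - τc i * sigm (s i))) (s i) := by
    have h2 := (((term_hasDerivAt (τr i) (τc i) (s i)).add_const C).const_mul (-(1 / (N : ℝ))))
    have hfe : (fun t : ℝ => L (Function.update s i t)) = fun t : ℝ => -(1 / (N : ℝ)) *
        ((τr i * Real.log (sigm t / (1 - sigm t)) + τc i * Real.log (1 - sigm t)) + C) :=
      funext hfun
    rw [hfe]
    exact h2
  have heq := (hcrit i).unique hg
  have hNne : (N : ℝ) ≠ 0 := Nat.cast_ne_zero.mpr hN.ne'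
  have hne : -(1 / (N : ℝ)) ≠ 0 := by
    simp [hNne]
  have hzero : τr i - τc i * sigm (s i) = 0 :=
    (mul_eq_zero.mp heq.symm).resolve_left hne
  rw [eq_div_iff (hτc i).ne']
  linarith
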